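/- arXiv:2412.03313 — 4 statements merged into one kernel-verified Lean document; each statement's English description precedes it below -/
import Mathlib

section
/- Let K be a number field, F an irreducible polynomial in K[X], and L/K the splitting field of F. If Gal(L/K) is abelian, then for any place v of K, either F splits completely over the completion K_v, or F has no roots in K_v. -/
open Polynomial NumberField IsDedekindDomain IntermediateField

/-- If a field extension `M` of `K` contains a root of `F` (irreducible with abelian
splitting field), then `F` splits over `M`. -/
theorem abelian_key_splits
    (K : Type*) [Field K] [CharZero K]
    (F : K[X]) (hF : Irreducible F)
    (hab : ∀ σ τ : F.SplittingField ≃ₐ[K] F.SplittingField, σ * τ = τ * σ)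
    (M : Type*) [Field M] [Algebra K M] (x : M) (hx : aeval x F = 0) :
    (F.map (algebraMap K M)).Splits := by
  haveI : IsGalois K F.SplittingField := ⟨⟩
  have hs : (F.map (algebraMap K F.SplittingField)).Splits := SplittingField.splits F
  have hd : F.degree ≠ 0 := (Polynomial.degree_pos_of_irreducible hF).ne'
  obtain ⟨α, hα⟩ := hs.exists_eval_eq_zero (by rwa [degree_map])
  have hα' : aeval α F = 0 := by rwa [aeval_def, eval₂_eq_eval_map]
  have hint : IsIntegral K α := .of_finite K α
  have hmin : minpoly K α = F * C F.leadingCoeff⁻¹ := (minpoly.eq_of_irreducible hF hα').symm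
  -- K⟮α⟯ = ⊤
  have hroots : F.rootSet F.SplittingField ⊆ (K⟮α⟯ : Set F.SplittingField) := by
    intro β hβ
    have hβ' : aeval β F = 0 := (mem_rootSet.mp hβ).2
    -- there is τ with τ α = β
    have hminβ : minpoly K β = F * C F.leadingCoeff⁻¹ := (minpoly.eq_of_irreducible hF hβ').symm
    obtain ⟨τ, hτ⟩ := (Normal.minpoly_eq_iff_mem_orbit (F := K) (E := F.SplittingField)).mp
      (hminβ.trans hmin.symm)
    have hτ' : τ α = β := hτ
    -- β is fixed by the fixing subgroup of K⟮α⟯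
    rw [← IsGalois.fixedField_fixingSubgroup K⟮α⟯]
    intro σ
    obtain ⟨σ, hσ⟩ := σ
    have hσα : σ α = α := hσ ⟨α, IntermediateField.mem_adjoin_simple_self K α⟩
    show σ β = β
    calc σ β = σ (τ α) := by rw [hτ']
      _ = (σ * τ) α := rfl
      _ = (τ * σ) α := by rw [hab]
      _ = τ (σ α) := rfl
      _ = τ α := by rw [hσα]
      _ = β := hτ'
  have htop : K⟮α⟯ = ⊤ := by
    have h1 : Algebra.adjoin K (F.rootSet F.SplittingField) ≤ K⟮α⟯.toSubalgebra :=
      Algebra.adjoin_le hroots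
    rw [Polynomial.SplittingField.adjoin_rootSet] at h1
    apply IntermediateField.toSubalgebra_injective
    rw [IntermediateField.top_toSubalgebra]
    exact top_le_iff.mp h1
  -- build a `K`-algebra hom `L →ₐ[K] M`
  let pb := IntermediateField.adjoin.powerBasis hint
  have hx' : aeval x (minpoly K pb.gen) = 0 := by
    show aeval x (minpoly K (IntermediateField.adjoin.powerBasis hint).gen) = 0
    rw [IntermediateField.adjoin.powerBasis_gen, IntermediateField.minpoly_gen, hmin]
    simp [hx]
  let φ : K⟮α⟯ →ₐ[K] M := pb.lift x hx'
  let e : F.SplittingField ≃ₐ[K] K⟮α⟯ :=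
    ((IntermediateField.equivOfEq htop).trans IntermediateField.topEquiv).symm
  let ψ : F.SplittingField →ₐ[K] M := φ.comp e.toAlgHom
  have := hs.map ψ.toRingHom
  have heq : (ψ.toRingHom).comp (algebraMap K F.SplittingField) = algebraMap K M := by
    ext a
    simp [ψ]
  rwa [Polynomial.map_map, heq] at this

/-- If `F` is irreducible over a number field `K` and the Galois group of its splitting
field is abelian, then at every place `v` of `K` (infinite or finite), `F` either splits
completely over the completion `K_v` or has no roots in `K_v`. -/
theorem abelian_splitting_field_all_or_no_roots_in_completion
    (K : Type*) [Field K] [NumberField K]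
    (F : K[X]) (hF : Irreducible F)
    (hab : ∀ σ τ : F.SplittingField ≃ₐ[K] F.SplittingField, σ * τ = τ * σ) :
    (∀ v : InfinitePlace K,
      (F.map (algebraMap K v.Completion)).Splits ∨ ∀ x : v.Completion, aeval x F ≠ 0) ∧
    (∀ v : HeightOneSpectrum (𝓞 K),
      (F.map (algebraMap K (v.adicCompletion K))).Splits ∨
        ∀ x : v.adicCompletion K, aeval x F ≠ 0) := by
  constructor
  · intro v
    by_cases h : ∀ x : v.Completion, aeval x F ≠ 0
    · exact Or.inr h
    · push_neg at h
      obtain ⟨x, hx⟩ := h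
      exact Or.inl (abelian_key_splits K F hF hab _ x hx)
  · intro v
    by_cases h : ∀ x : v.adicCompletion K, aeval x F ≠ 0
    · exact Or.inr h
    · push_neg at h
      obtain ⟨x, hx⟩ := h
      exact Or.inl (abelian_key_splits K F hF hab _ x hx)
end

section
/- Let c ∈ ℝ and f(X) = X² + c. The Julia set of f is contained in ℝ if and only if c ≤ −2. -/
open Bornology

/-- The filled Julia set of the map `z ↦ z² + c`. -/
def filledJuliaQuadratic (c : ℝ) : Set ℂ :=
  {z : ℂ | IsBounded (Set.range fun n : ℕ => (fun w : ℂ => w ^ 2 + (c : ℂ))^[n] z)}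

private lemma julia_aux_norm_sq_sub (c : ℝ) (w : ℂ) : ‖w‖^2 - |c| ≤ ‖w^2 + (c:ℂ)‖ := by
  have h : ‖w^2‖ ≤ ‖w^2 + (c:ℂ)‖ + ‖(c:ℂ)‖ := by
    calc ‖w^2‖ = ‖(w^2 + (c:ℂ)) + (-(c:ℂ))‖ := by ring_nf
    _ ≤ ‖w^2 + (c:ℂ)‖ + ‖(-(c:ℂ))‖ := norm_add_le _ _
    _ = ‖w^2 + (c:ℂ)‖ + ‖(c:ℂ)‖ := by rw [norm_neg]
  rw [norm_pow] at h
  have : ‖(c:ℂ)‖ = |c| := Complex.norm_real c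
  linarith

private lemma julia_escape {c R : ℝ}
    (hstep : ∀ w : ℂ, R < ‖w‖ → R + 2*(‖w‖ - R) ≤ ‖w^2 + (c:ℂ)‖)
    {z : ℂ} (hz : IsBounded (Set.range fun n : ℕ => (fun w : ℂ => w ^ 2 + (c : ℂ))^[n] z))
    (n : ℕ) : ‖(fun w : ℂ => w ^ 2 + (c:ℂ))^[n] z‖ ≤ R := by
  by_contra hct
  push_neg at hct
  set F : ℂ → ℂ := fun w : ℂ => w ^ 2 + (c:ℂ) with hF
  set ε := ‖F^[n] z‖ - R with hε
  have hε0 : 0 < ε := sub_pos.mpr hct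
  have key : ∀ k : ℕ, R + 2^k * ε ≤ ‖F^[n+k] z‖ := by
    intro k
    induction k with
    | zero => simp [hε]
    | succ k ih =>
      have h1 : R < ‖F^[n+k] z‖ := by
        have : (0:ℝ) < 2^k * ε := by positivity
        linarith
      have h2 := hstep (F^[n+k] z) h1
      have h3 : F^[n+(k+1)] z = (F^[n+k] z)^2 + (c:ℂ) := by
        rw [show n+(k+1) = (n+k)+1 by ring, Function.iterate_succ_apply']
      rw [h3]
      have hp : (2:ℝ)^(k+1) = 2^k * 2 := pow_succ 2 k
      calc R + 2^(k+1) * ε ≤ R + 2*(‖F^[n+k] z‖ - R) := by rw [hp]; linarith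
      _ ≤ _ := h2
  obtain ⟨C, hC⟩ := isBounded_iff_forall_norm_le.mp hz
  obtain ⟨k, hk⟩ := pow_unbounded_of_one_lt ((C - R)/ε) (by norm_num : (1:ℝ) < 2)
  have h4 := key k
  have h5 : ‖F^[n+k] z‖ ≤ C := hC _ ⟨n+k, rfl⟩
  rw [div_lt_iff₀ hε0] at hk
  linarith

set_option maxHeartbeats 1000000 in
private lemma julia_forward {c : ℝ} (hc : c ≤ -2) {z : ℂ}
    (hz : IsBounded (Set.range fun n : ℕ => (fun w : ℂ => w ^ 2 + (c : ℂ))^[n] z)) :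
    z.im = 0 := by
  by_contra him
  set F : ℂ → ℂ := fun w : ℂ => w ^ 2 + (c:ℂ) with hF
  set s : ℝ := Real.sqrt (1 - 4*c) with hs
  have hs3 : 3 ≤ s := by
    rw [hs, show (3:ℝ) = Real.sqrt 9 by rw [show (9:ℝ) = 3^2 by norm_num, Real.sqrt_sq]; norm_num]
    exact Real.sqrt_le_sqrt (by linarith)
  have hs2 : s^2 = 1 - 4*c := Real.sq_sqrt (by linarith)
  set β : ℝ := (1 + s)/2 with hβ
  have hβ2 : β^2 = β - c := by rw [hβ]; nlinarith
  have hβge : 2 ≤ β := by rw [hβ]; linarith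
  -- all iterates stay in the closed ball of radius β
  have hbound : ∀ n, ‖F^[n] z‖ ≤ β := by
    refine julia_escape (fun w hw => ?_) hz
    have h1 := julia_aux_norm_sq_sub c w
    have hcabs : |c| = β^2 - β := by
      rw [abs_of_neg (by linarith : c < 0)]; linarith
    nlinarith [mul_pos (sub_pos.mpr hw) (by linarith : (0:ℝ) < ‖w‖ + β - 2)]
  set d : ℝ := β^2 - 2*β with hd
  have hd0 : 0 ≤ d := by nlinarith
  -- real and imaginary parts
  have hre : ∀ n, (F^[n+1] z).re = (F^[n] z).re^2 - (F^[n] z).im^2 + c := by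
    intro n
    rw [Function.iterate_succ_apply', hF]
    simp [pow_two, Complex.mul_re]
  have him' : ∀ n, (F^[n+1] z).im = 2 * (F^[n] z).re * (F^[n] z).im := by
    intro n
    rw [Function.iterate_succ_apply', hF]
    simp [pow_two, Complex.mul_im]
    ring
  -- fact1 : d + im² ≤ re²
  have fact1 : ∀ n, d + (F^[n] z).im^2 ≤ (F^[n] z).re^2 := by
    intro n
    have h1 : -β ≤ (F^[n+1] z).re := by
      have := Complex.abs_re_le_norm (F^[n+1] z)
      have h2 := hbound (n+1)
      cases abs_le.mp (le_trans this h2) with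
      | intro a b => linarith
    rw [hre n] at h1
    nlinarith
  -- fact2 : im ≠ 0
  have fact2 : ∀ n, (F^[n] z).im ≠ 0 := by
    intro n
    induction n with
    | zero => simpa using him
    | succ n ih =>
      rw [him' n]
      have hx : (F^[n] z).re ≠ 0 := by
        intro h
        have := fact1 n
        rw [h] at this
        nlinarith [sq_nonneg (F^[n] z).im, pow_pos (lt_of_le_of_ne (by positivity) (Ne.symm (pow_ne_zero 2 ih))) 1]
      exact mul_ne_zero (mul_ne_zero two_ne_zero hx) ih
  have hu2pos : ∀ n, 0 < (F^[n] z).im^2 := fun n =>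
    lt_of_le_of_ne (sq_nonneg _) (Ne.symm (pow_ne_zero 2 (fact2 n)))
  set S : ℕ → ℝ := fun n => ‖((β:ℂ))^2 - (F^[n] z)^2‖ with hS
  -- fact3 : multiplicativity of S
  have hcβ : (c:ℂ) = (β:ℂ) - (β:ℂ)^2 := by
    have : c = β - β^2 := by linarith
    exact_mod_cast congrArg (fun t : ℝ => (t:ℂ)) this
  have hdβ : ((d:ℝ):ℂ) = (β:ℂ)^2 - 2*(β:ℂ) := by rw [hd]; push_cast; ring
  have fact3 : ∀ n, S (n+1) = S n * ‖(F^[n] z)^2 - ((d:ℝ):ℂ)‖ := by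
    intro n
    have hid : ((β:ℂ))^2 - (F^[n+1] z)^2
        = (((β:ℂ))^2 - (F^[n] z)^2) * ((F^[n] z)^2 - ((d:ℝ):ℂ)) := by
      rw [Function.iterate_succ_apply']
      simp only [hF]
      rw [hcβ, hdβ]
      ring
    rw [hS]
    simp only []
    rw [hid, norm_mul]
  -- fact4 : key expansion estimate
  have fact4 : ∀ n, ‖(F^[n] z)^2 - ((d:ℝ):ℂ)‖ * (7/4) ≤ 4 * (F^[n] z).re^2 := by
    intro n
    set x : ℝ := (F^[n] z).re
    set u : ℝ := (F^[n] z).im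
    set v : ℂ := (F^[n] z)^2 - ((d:ℝ):ℂ) with hv
    have hvre : v.re = x^2 - u^2 - d := by
      rw [hv]
      simp only [Complex.sub_re, Complex.ofReal_re, pow_two, Complex.mul_re]
      all_goals ring
    have hvim : v.im = 2*x*u := by
      rw [hv]
      simp only [Complex.sub_im, Complex.ofReal_im, pow_two, Complex.mul_im]
      all_goals ring
    have hnv : ‖v‖^2 = (x^2 - u^2 - d)^2 + (2*x*u)^2 := by
      rw [Complex.sq_norm, Complex.normSq_apply, hvre, hvim]; ring
    have h1 := fact1 n
    have hA : 0 ≤ x^2 - u^2 - d := by linarith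
    have hu2 : u^2 ≤ x^2 := by linarith
    have hx2 : 0 < x^2 := lt_of_lt_of_le (by nlinarith [hu2pos n]) h1
    have hsq : ‖v‖^2 ≤ 5*x^4 := by nlinarith [sq_nonneg (x^2 - u^2 - d)]
    nlinarith [norm_nonneg v, hsq, hx2, sq_nonneg (‖v‖ - 2*x^2)]
  -- fact5 : S n is at least 2 im²
  have fact5 : ∀ n, 2*(F^[n] z).im^2 ≤ S n := by
    intro n
    set x : ℝ := (F^[n] z).re
    set u : ℝ := (F^[n] z).im
    have h1 : |(((β:ℂ))^2 - (F^[n] z)^2).im| ≤ S n := by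
      rw [hS]; simp only []
      exact Complex.abs_im_le_norm _
    have h2 : (((β:ℂ))^2 - (F^[n] z)^2).im = -(2*x*u) := by
      simp [pow_two, Complex.mul_im]; ring
    rw [h2, abs_neg] at h1
    have h3 : |u| ≤ |x| := by
      nlinarith [sq_abs u, sq_abs x, fact1 n, hd0, abs_nonneg u, abs_nonneg x]
    have h4 : |2*x*u| = 2 * (|x| * |u|) := by
      rw [abs_mul, abs_mul, abs_two]; ring
    nlinarith [abs_nonneg u, sq_abs u, h1, h4,
      mul_le_mul_of_nonneg_right h3 (abs_nonneg u)]
  -- main induction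
  have main : ∀ n, (7/4:ℝ)^n * (z.im^2 * S n) ≤ (F^[n] z).im^2 * S 0 := by
    intro n
    induction n with
    | zero => simp
    | succ n ih =>
      have e1 : (F^[n+1] z).im^2 = 4*(F^[n] z).re^2*(F^[n] z).im^2 := by
        rw [him' n]; ring
      calc (7/4:ℝ)^(n+1) * (z.im^2 * S (n+1))
          = ((7/4:ℝ)^n * (z.im^2 * S n)) * ((7/4) * ‖(F^[n] z)^2 - ((d:ℝ):ℂ)‖) := by
            rw [fact3 n, pow_succ]; ring
        _ ≤ ((F^[n] z).im^2 * S 0) * ((7/4) * ‖(F^[n] z)^2 - ((d:ℝ):ℂ)‖) := by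
            apply mul_le_mul_of_nonneg_right ih
            positivity
        _ = ((F^[n] z).im^2 * S 0) * (‖(F^[n] z)^2 - ((d:ℝ):ℂ)‖ * (7/4)) := by ring
        _ ≤ ((F^[n] z).im^2 * S 0) * (4 * (F^[n] z).re^2) := by
            apply mul_le_mul_of_nonneg_left (fact4 n)
            positivity
        _ = (F^[n+1] z).im^2 * S 0 := by rw [e1]; ring
  -- conclusion
  have key : ∀ n, (7/4:ℝ)^n * (2*z.im^2) ≤ S 0 := by
    intro n
    have h6 : (7/4:ℝ)^n * (z.im^2 * (2*(F^[n] z).im^2)) ≤ (F^[n] z).im^2 * S 0 := by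
      refine le_trans ?_ (main n)
      apply mul_le_mul_of_nonneg_left _ (by positivity : (0:ℝ) ≤ (7/4:ℝ)^n)
      exact mul_le_mul_of_nonneg_left (fact5 n) (sq_nonneg _)
    have h7 : ((7/4:ℝ)^n * (2*z.im^2)) * (F^[n] z).im^2 ≤ S 0 * (F^[n] z).im^2 := by
      linear_combination h6
    exact le_of_mul_le_mul_right h7 (hu2pos n)
  have hzim2 : 0 < 2*z.im^2 := by
    have : 0 < z.im^2 := lt_of_le_of_ne (sq_nonneg _) (Ne.symm (pow_ne_zero 2 him))
    linarith
  obtain ⟨n, hn⟩ := pow_unbounded_of_one_lt (S 0 / (2*z.im^2)) (by norm_num : (1:ℝ) < 7/4)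
  rw [div_lt_iff₀ hzim2] at hn
  linarith [key n]

-- a nonreal point with bounded orbit, when c > -2
private lemma julia_nonreal {c : ℝ} (hc : -2 < c) :
    ∃ z : ℂ, 0 < z.im ∧ z ∈ filledJuliaQuadratic c := by
  set F : ℂ → ℂ := fun w : ℂ => w ^ 2 + (c:ℂ) with hF
  by_cases hc4 : c ≤ 1/4
  · -- use i√(c+β), which maps to -β, then to the fixed point β
    set s : ℝ := Real.sqrt (1 - 4*c) with hs
    have hs0 : 0 ≤ s := Real.sqrt_nonneg _
    have hs3 : s < 3 := by
      have h9 : Real.sqrt (1-4*c) < Real.sqrt 9 :=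
        Real.sqrt_lt_sqrt (by linarith) (by linarith)
      have : Real.sqrt 9 = 3 := by
        rw [show (9:ℝ) = 3^2 by norm_num, Real.sqrt_sq]; norm_num
      linarith [h9, this.le]
    have hs2 : s^2 = 1 - 4*c := Real.sq_sqrt (by linarith)
    set β : ℝ := (1 + s)/2 with hβ
    have hβ2 : β^2 = β - c := by rw [hβ]; nlinarith
    have hβpos : 0 < β := by rw [hβ]; linarith
    have hβlt : β < 2 := by rw [hβ]; linarith
    have hcβ : 0 < c + β := by nlinarith
    set r : ℝ := Real.sqrt (c + β) with hr
    have hr2 : r^2 = c + β := Real.sq_sqrt hcβ.le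
    have hrpos : 0 < r := Real.sqrt_pos.mpr hcβ
    refine ⟨Complex.I * (r:ℂ), by simp [hrpos], ?_⟩
    have hstep1 : F (Complex.I * (r:ℂ)) = ((-β : ℝ) : ℂ) := by
      rw [hF]
      simp only []
      have : (Complex.I * (r:ℂ))^2 = -((r^2 : ℝ) : ℂ) := by
        push_cast; ring_nf; rw [Complex.I_sq]; ring
      rw [this, hr2]
      push_cast; ring
    have hstep2 : F ((-β : ℝ) : ℂ) = ((β : ℝ) : ℂ) := by
      rw [hF]; simp only []
      have : c = β - β^2 := by linarith
      push_cast [this]; ring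
    have hstep3 : F ((β : ℝ) : ℂ) = ((β : ℝ) : ℂ) := by
      rw [hF]; simp only []
      have : c = β - β^2 := by linarith
      push_cast [this]; ring
    have horb : ∀ n, F^[n] (Complex.I * (r:ℂ)) ∈
        ({Complex.I * (r:ℂ), ((-β : ℝ) : ℂ), ((β : ℝ) : ℂ)} : Set ℂ) := by
      intro n
      induction n with
      | zero => simp
      | succ n ih =>
        rw [Function.iterate_succ_apply']
        rcases ih with h | h | h
        · rw [h, hstep1]; simp
        · rw [h, hstep2]; simp
        · rw [h, hstep3]; simp
    exact IsBounded.subset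
      ((Set.finite_singleton _).insert _ |>.insert _).isBounded
      (Set.range_subset_iff.mpr horb)
  · -- nonreal fixed point
    push_neg at hc4
    set t : ℝ := Real.sqrt (4*c - 1) with ht
    have ht2 : t^2 = 4*c - 1 := Real.sq_sqrt (by linarith)
    have htpos : 0 < t := Real.sqrt_pos.mpr (by linarith)
    set z₀ : ℂ := (1 + (t:ℂ) * Complex.I)/2 with hz₀
    have hfix : F z₀ = z₀ := by
      rw [hF, hz₀]
      have h1 : ((t:ℝ):ℂ)^2 = 4*(c:ℂ) - 1 := by
        rw [← Complex.ofReal_pow, ht2]; push_cast; ring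
      linear_combination (Complex.I^2/4) * h1 + ((4*(c:ℂ)-1)/4) * Complex.I_sq
    refine ⟨z₀, ?_, ?_⟩
    · rw [hz₀]; simp [htpos]
    · have horb : ∀ n, F^[n] z₀ = z₀ := fun n => Function.iterate_fixed hfix n
      have : (Set.range fun n : ℕ => F^[n] z₀) ⊆ {z₀} := by
        rintro w ⟨n, rfl⟩; simp [horb n]
      exact IsBounded.subset (Set.finite_singleton _).isBounded this

private lemma julia_reverse {c : ℝ}
    (h : frontier (filledJuliaQuadratic c) ⊆ Set.range ((↑) : ℝ → ℂ)) : c ≤ -2 := by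
  by_contra hc
  push_neg at hc
  obtain ⟨z₀, hz₀im, hz₀K⟩ := julia_nonreal hc
  set K := filledJuliaQuadratic c with hK
  set R : ℝ := |c| + 2 with hR
  have hKR : K ⊆ Metric.closedBall (0:ℂ) R := by
    intro w hw
    have h0 := julia_escape (c := c) (R := R) (fun v hv => ?_) hw 0
    · simpa using h0
    · have h1 := julia_aux_norm_sq_sub c v
      nlinarith [sq_nonneg (‖v‖ - 1)]
  -- z₀ is in the interior of K
  have hz₀notfr : z₀ ∉ frontier K := by
    intro hmem
    obtain ⟨x, hx⟩ := h hmem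
    rw [← hx] at hz₀im
    simp at hz₀im
  have hz₀int : z₀ ∈ interior K := by
    have : z₀ ∈ closure K := subset_closure hz₀K
    rw [closure_eq_interior_union_frontier] at this
    exact this.resolve_right hz₀notfr
  -- the upper half plane is preconnected
  have hH : IsPreconnected {w : ℂ | 0 < w.im} :=
    (convex_halfSpace_im_gt (0:ℝ)).isPreconnected
  have hsub : {w : ℂ | 0 < w.im} ⊆ interior K ∪ (closure K)ᶜ := by
    intro w hw
    by_cases hwK : w ∈ closure K
    · left
      rw [closure_eq_interior_union_frontier] at hwK
      refine hwK.resolve_right fun hfr => ?_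
      obtain ⟨x, hx⟩ := h hfr
      rw [← hx] at hw
      simpa using hw
    · right; exact hwK
  have hne1 : ({w : ℂ | 0 < w.im} ∩ interior K).Nonempty := ⟨z₀, hz₀im, hz₀int⟩
  have hne2 : ({w : ℂ | 0 < w.im} ∩ (closure K)ᶜ).Nonempty := by
    refine ⟨(((R+1):ℝ):ℂ) * Complex.I, ?_, ?_⟩
    · have : ((((R+1):ℝ):ℂ) * Complex.I).im = R+1 := by simp
      rw [Set.mem_setOf_eq, this, hR]
      positivity
    · intro hmem
      have h1 : closure K ⊆ Metric.closedBall (0:ℂ) R :=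
        closure_minimal hKR Metric.isClosed_closedBall
      have h2 := h1 hmem
      rw [Metric.mem_closedBall, dist_zero_right] at h2
      have h3 : ‖(((R+1):ℝ):ℂ) * Complex.I‖ = R + 1 := by
        rw [norm_mul, Complex.norm_I, mul_one, Complex.norm_real, Real.norm_eq_abs]
        refine abs_of_nonneg ?_
        rw [hR]; positivity
      rw [h3] at h2
      linarith
  obtain ⟨w, hw⟩ := hH (interior K) (closure K)ᶜ isOpen_interior
    isClosed_closure.isOpen_compl hsub hne1 hne2
  exact hw.2.2 (interior_subset_closure hw.2.1)

/-- The Julia set of `f(X) = X² + c`, i.e. the boundary of the filled Julia set, is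
contained in `ℝ` if and only if `c ≤ -2`. -/
theorem julia_quadratic_real_iff (c : ℝ) :
    frontier (filledJuliaQuadratic c) ⊆ Set.range ((↑) : ℝ → ℂ) ↔ c ≤ -2 := by
  constructor
  · exact julia_reverse
  · intro hc
    have hKsub : filledJuliaQuadratic c ⊆ Set.range ((↑) : ℝ → ℂ) := by
      intro z hz
      have him := julia_forward hc hz
      exact ⟨z.re, by apply Complex.ext <;> simp [him]⟩
    have hclosed : IsClosed (Set.range ((↑) : ℝ → ℂ)) :=
      Complex.isUniformEmbedding_ofReal.isClosedEmbedding.isClosed_range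
    exact fun w hw => (closure_minimal hKsub hclosed) (frontier_subset_closure hw)
end

section
/- Let f ∈ ℝ[X] have odd degree d ≥ 3 with positive leading coefficient, and let a₁ and a₂ be its smallest and largest real fixed points. Then every real preperiodic point of f lies in the interval [a₁, a₂]. -/
open Polynomial Filter

/-- For a real polynomial of odd degree `d ≥ 3` with positive leading coefficient, with
smallest real fixed point `a₁` and largest real fixed point `a₂`, every real preperiodic
point (point with finite forward orbit) lies in `[a₁, a₂]`. -/
theorem preperiodic_mem_Icc_fixed_points
    (f : ℝ[X]) (hdeg : 3 ≤ f.natDegree) (hodd : Odd f.natDegree)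
    (hlead : 0 < f.leadingCoeff)
    (a₁ a₂ : ℝ) (hfix₁ : f.eval a₁ = a₁) (hfix₂ : f.eval a₂ = a₂)
    (hmin : ∀ y : ℝ, f.eval y = y → a₁ ≤ y) (hmax : ∀ y : ℝ, f.eval y = y → y ≤ a₂) :
    ∀ x : ℝ, (Set.range fun n : ℕ => (fun y => f.eval y)^[n] x).Finite →
      x ∈ Set.Icc a₁ a₂ := by
  -- the polynomial g = f - X
  set g : ℝ[X] := f - X with hg
  have hX : (X : ℝ[X]).natDegree < f.natDegree := by
    simpa using lt_of_lt_of_le (by norm_num) hdeg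
  have hgdeg : g.natDegree = f.natDegree := natDegree_sub_eq_left_of_natDegree_lt hX
  have hgne : g ≠ 0 := by
    intro h
    rw [h] at hgdeg
    simp at hgdeg; omega
  have hgdegpos : 0 < g.degree := by
    rw [← natDegree_pos_iff_degree_pos, hgdeg]; omega
  have hglc : g.leadingCoeff = f.leadingCoeff := by
    rw [leadingCoeff, hgdeg, hg, coeff_sub, coeff_X, if_neg (by omega),
      sub_zero, leadingCoeff]
  have hgeval : ∀ y : ℝ, g.eval y = f.eval y - y := by
    intro y; simp [hg]
  -- g > 0 on (a₂, ∞)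
  have hpos : ∀ y : ℝ, a₂ < y → 0 < g.eval y := by
    intro y hy
    by_contra h
    push_neg at h
    -- find z ≥ y with g z ≥ 0
    have htop : Tendsto (fun x => g.eval x) atTop atTop :=
      tendsto_atTop_of_leadingCoeff_nonneg g hgdegpos (hglc ▸ hlead.le)
    obtain ⟨z, hz⟩ := ((htop.eventually_ge_atTop 0).and (eventually_ge_atTop y)).exists
    have hcont : ContinuousOn (fun x => g.eval x) (Set.Icc y z) :=
      (Polynomial.continuous g).continuousOn
    obtain ⟨w, hw, hw0⟩ := intermediate_value_Icc hz.2 hcont ⟨h, hz.1⟩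
    have hw0' : g.eval w = 0 := hw0
    have : f.eval w = w := by have := hgeval w; linarith
    exact absurd (hmax w this) (not_le.mpr (lt_of_lt_of_le hy hw.1))
  -- g < 0 on (-∞, a₁)
  have hneg : ∀ y : ℝ, y < a₁ → g.eval y < 0 := by
    intro y hy
    by_contra h
    push_neg at h
    -- h : 0 ≤ g.eval y ; find z ≤ y with g z ≤ 0
    set h' : ℝ[X] := g.comp (-X) with hh'
    have hcomp : ∀ x : ℝ, h'.eval x = g.eval (-x) := by
      intro x; simp [hh', eval_comp]
    have hXne : (-X : ℝ[X]).natDegree ≠ 0 := by simp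
    have hlc' : h'.leadingCoeff = g.leadingCoeff * (-1) ^ g.natDegree := by
      rw [hh', leadingCoeff_comp hXne]
      congr 1
      simp
    have hlcneg : h'.leadingCoeff ≤ 0 := by
      rw [hlc', hgdeg, hodd.neg_one_pow, hglc]
      nlinarith
    have hdeg' : 0 < h'.degree := by
      rw [← natDegree_pos_iff_degree_pos, hh', natDegree_comp, hgdeg]
      simp; omega
    have hbot : Tendsto (fun x => h'.eval x) atTop atBot :=
      tendsto_atBot_of_leadingCoeff_nonpos h' hdeg' hlcneg
    obtain ⟨z, hz⟩ := ((hbot.eventually_le_atBot 0).and (eventually_ge_atTop (-y))).exists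
    have hzy : -z ≤ y := by linarith [hz.2]
    have hz0 : g.eval (-z) ≤ 0 := by rw [← hcomp]; exact hz.1
    have hcont : ContinuousOn (fun x => g.eval x) (Set.Icc (-z) y) :=
      (Polynomial.continuous g).continuousOn
    obtain ⟨w, hw, hw0⟩ := intermediate_value_Icc hzy hcont ⟨hz0, h⟩
    have hw0' : g.eval w = 0 := hw0
    have : f.eval w = w := by have := hgeval w; linarith
    exact absurd (hmin w this) (not_le.mpr (lt_of_le_of_lt hw.2 hy))
  intro x hfin
  by_contra hx
  simp only [Set.mem_Icc, not_and_or, not_le] at hx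
  have key : StrictMono (fun n : ℕ => (fun y => f.eval y)^[n] x) := by
    rcases hx with hx | hx
    ·
      have step : ∀ n : ℕ, (fun y => f.eval y)^[n] x < a₁ ∧
          (fun y => f.eval y)^[n+1] x < (fun y => f.eval y)^[n] x := by
        intro n
        induction n with
        | zero =>
          refine ⟨hx, ?_⟩
          have := hneg x hx
          rw [hgeval] at this
          simpa using by linarith
        | succ n ih =>
          refine ⟨lt_of_lt_of_le ih.2 (le_of_lt ih.1), ?_⟩
          have := hneg _ (lt_of_lt_of_le ih.2 ih.1.le)
          rw [hgeval] at this
          rw [Function.iterate_succ_apply' (fun y => f.eval y) (n+1) x]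
          linarith
      exact absurd hfin (Set.infinite_range_of_injective
        (strictAnti_nat_of_succ_lt (fun n => (step n).2)).injective)
    · have step : ∀ n : ℕ, a₂ < (fun y => f.eval y)^[n] x ∧
          (fun y => f.eval y)^[n] x < (fun y => f.eval y)^[n+1] x := by
        intro n
        induction n with
        | zero =>
          refine ⟨hx, ?_⟩
          have := hpos x hx
          rw [hgeval] at this
          simpa using by linarith
        | succ n ih =>
          refine ⟨lt_of_lt_of_le ih.1 ih.2.le, ?_⟩
          have := hpos _ (lt_of_lt_of_le ih.1 ih.2.le)
          rw [hgeval] at this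
          rw [Function.iterate_succ_apply' (fun y => f.eval y) (n+1) x]
          linarith
      exact strictMono_nat_of_lt_succ (fun n => (step n).2)
  exact absurd hfin (Set.infinite_range_of_injective key.injective)
end

section
/- Let E be an elliptic curve over ℝ with Weierstrass equation y² = F(x) where F(x) = x³ + ax² + bx + c, and let f(X) = (F'(X)² − (8X + 4a)F(X))/(4F(X)) be the Lattès map associated to duplication. If disc(F) < 0 (so F has exactly one real root α), then f : ℙ¹(ℝ) → ℙ¹(ℝ) is surjective. -/
open OnePoint

/-- The Lattès map `f(X) = (F'(X)² - (8X + 4a)F(X))/(4F(X))` (where `F = X³+aX²+bX+c`)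
associated to duplication on `y² = F(x)`, extended to a self-map of `ℙ¹(ℝ) = ℝ ∪ {∞}`:
poles (real roots of `F`) and `∞` are sent to `∞`. -/
noncomputable def lattesExt (a b c : ℝ) : OnePoint ℝ → OnePoint ℝ := fun p =>
  Option.elim p ∞ fun x =>
    let F : ℝ → ℝ := fun t => t ^ 3 + a * t ^ 2 + b * t + c
    let F' : ℝ → ℝ := fun t => 3 * t ^ 2 + 2 * a * t + b
    if F x = 0 then ∞
    else ((F' x ^ 2 - (8 * x + 4 * a) * F x) / (4 * F x) : ℝ)

/-- A crude bound: a monic quartic dominates lower order terms for large argument. -/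
lemma lattes_quartic_bound (A B C D s : ℝ) (hA : 0 ≤ A) (hB : 0 ≤ B) (hC : 0 ≤ C)
    (hD : 0 ≤ D) (hs : 1 + A + B + C + D ≤ s) :
    A * s ^ 3 + B * s ^ 2 + C * s + D < s ^ 4 := by
  have h1 : (1 : ℝ) ≤ s := by linarith
  have h0 : (0 : ℝ) ≤ s := by linarith
  have h23 : s ^ 2 ≤ s ^ 3 := by nlinarith [mul_nonneg (mul_nonneg h0 h0) (sub_nonneg.mpr h1)]
  have h13 : s ≤ s ^ 3 := by nlinarith [mul_nonneg h0 (sub_nonneg.mpr h1), sq_nonneg s]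
  have h03 : (1 : ℝ) ≤ s ^ 3 := by nlinarith
  have f1 : (1 + A + B + C + D) * s ^ 3 ≤ s * s ^ 3 :=
    mul_le_mul_of_nonneg_right hs (by positivity)
  have f2 : B * s ^ 2 ≤ B * s ^ 3 := mul_le_mul_of_nonneg_left h23 hB
  have f3 : C * s ≤ C * s ^ 3 := mul_le_mul_of_nonneg_left h13 hC
  have f4 : D * 1 ≤ D * s ^ 3 := mul_le_mul_of_nonneg_left h03 hD
  nlinarith [f1, f2, f3, f4]

set_option maxHeartbeats 1600000 in
/-- Existence of a suitable real preimage for the (affine) Lattès map. -/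
lemma lattes_exists_preimage (a b c : ℝ)
    (hdisc : 18 * a * b * c - 4 * a ^ 3 * c + a ^ 2 * b ^ 2 - 4 * b ^ 3 - 27 * c ^ 2 < 0)
    (r : ℝ) :
    ∃ x : ℝ, x ^ 3 + a * x ^ 2 + b * x + c ≠ 0 ∧
      (3 * x ^ 2 + 2 * a * x + b) ^ 2 - (8 * x + 4 * a) * (x ^ 3 + a * x ^ 2 + b * x + c)
        - 4 * r * (x ^ 3 + a * x ^ 2 + b * x + c) = 0 := by
  have hFcont : Continuous fun t : ℝ => t ^ 3 + a * t ^ 2 + b * t + c := by fun_prop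
  -- a real root α of the cubic
  obtain ⟨α, hα⟩ : ∃ α : ℝ, α ^ 3 + a * α ^ 2 + b * α + c = 0 := by
    set M : ℝ := |a| + |b| + |c| + 1 with hM
    have hM1 : (1 : ℝ) ≤ M := by
      have := abs_nonneg a; have := abs_nonneg b; have := abs_nonneg c; linarith
    have hya : -|a| ≤ a ∧ a ≤ |a| := ⟨neg_abs_le a, le_abs_self a⟩
    have hyb : -|b| ≤ b ∧ b ≤ |b| := ⟨neg_abs_le b, le_abs_self b⟩
    have hyc : -|c| ≤ c ∧ c ≤ |c| := ⟨neg_abs_le c, le_abs_self c⟩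
    have hneg : (-M) ^ 3 + a * (-M) ^ 2 + b * (-M) + c ≤ 0 := by
      nlinarith [hya.2, hyb.1, hyc.2, sq_nonneg M, mul_le_mul_of_nonneg_left hya.2 (sq_nonneg M),
        mul_le_mul_of_nonneg_right hyb.1 (by linarith : (0:ℝ) ≤ M)]
    have hpos : 0 ≤ M ^ 3 + a * M ^ 2 + b * M + c := by
      nlinarith [hya.1, hyb.1, hyc.1, sq_nonneg M, mul_le_mul_of_nonneg_left hya.1 (sq_nonneg M),
        mul_le_mul_of_nonneg_right hyb.1 (by linarith : (0:ℝ) ≤ M)]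
    have hsub := intermediate_value_Icc (by linarith : -M ≤ M) hFcont.continuousOn
    obtain ⟨α, _, hα⟩ := hsub ⟨hneg, hpos⟩
    exact ⟨α, hα⟩
  have hc : c = -α ^ 3 - a * α ^ 2 - b * α := by linarith
  -- the quadratic factor is everywhere positive
  have hg : (a + α) ^ 2 - 4 * (α ^ 2 + a * α + b) < 0 := by
    have h2 : 18 * a * b * c - 4 * a ^ 3 * c + a ^ 2 * b ^ 2 - 4 * b ^ 3 - 27 * c ^ 2 =
        ((a + α) ^ 2 - 4 * (α ^ 2 + a * α + b)) * (3 * α ^ 2 + 2 * a * α + b) ^ 2 := by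
      rw [hc]; ring
    rw [h2] at hdisc
    by_contra h
    push_neg at h
    nlinarith [sq_nonneg (3 * α ^ 2 + 2 * a * α + b)]
  have hgpos : ∀ x : ℝ, 0 < x ^ 2 + (a + α) * x + (α ^ 2 + a * α + b) := by
    intro x; nlinarith [sq_nonneg (2 * x + (a + α))]
  have hfac : ∀ x : ℝ, x ^ 3 + a * x ^ 2 + b * x + c =
      (x - α) * (x ^ 2 + (a + α) * x + (α ^ 2 + a * α + b)) := by
    intro x; rw [hc]; ring
  have hFpos : ∀ x : ℝ, α < x → 0 < x ^ 3 + a * x ^ 2 + b * x + c := by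
    intro x hx; rw [hfac x]; exact mul_pos (by linarith) (hgpos x)
  have hFneg : ∀ x : ℝ, x < α → x ^ 3 + a * x ^ 2 + b * x + c < 0 := by
    intro x hx; rw [hfac x]; exact mul_neg_of_neg_of_pos (by linarith) (hgpos x)
  have hgα : 0 < 3 * α ^ 2 + 2 * a * α + b := by nlinarith [hgpos α]
  -- the square root giving the roots of the quadratic Q
  set s0 : ℝ := Real.sqrt (3 * α ^ 2 + 2 * a * α + b) with hs0def
  have hs0 : s0 ^ 2 = 3 * α ^ 2 + 2 * a * α + b := Real.sq_sqrt hgα.le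
  have hs0pos : 0 < s0 := Real.sqrt_pos.mpr hgα
  -- the affine part of the Lattès map, cleared of denominators
  set H : ℝ → ℝ := fun t =>
    (3 * t ^ 2 + 2 * a * t + b) ^ 2 - (8 * t + 4 * a) * (t ^ 3 + a * t ^ 2 + b * t + c)
      - 4 * r * (t ^ 3 + a * t ^ 2 + b * t + c) with hHdef
  have hHcont : Continuous H := by rw [hHdef]; fun_prop
  -- key algebraic identity
  have hQ : ∀ x : ℝ, H x = (x ^ 2 - 2 * α * x - (2 * α ^ 2 + 2 * a * α + b)) ^ 2
      - 4 * (r - α) * (x ^ 3 + a * x ^ 2 + b * x + c) := by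
    intro x; rw [hHdef]; simp only; rw [hc]; ring
  -- values at the roots of Q
  have hQ1 : (α + s0) ^ 2 - 2 * α * (α + s0) - (2 * α ^ 2 + 2 * a * α + b) = 0 := by
    nlinarith [hs0]
  have hQ2 : (α - s0) ^ 2 - 2 * α * (α - s0) - (2 * α ^ 2 + 2 * a * α + b) = 0 := by
    nlinarith [hs0]
  -- bound for large |x|
  set A : ℝ := |4 * r| with hA
  set B : ℝ := |2 * b + 4 * a * r| with hB
  set C : ℝ := |8 * c + 4 * b * r| with hC
  set D : ℝ := |b ^ 2 - 4 * a * c - 4 * c * r| with hD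
  set K : ℝ := 1 + A + B + C + D with hK
  have hAn : 0 ≤ A := abs_nonneg _
  have hBn : 0 ≤ B := abs_nonneg _
  have hCn : 0 ≤ C := abs_nonneg _
  have hDn : 0 ≤ D := abs_nonneg _
  have hbig : ∀ s : ℝ, K ≤ s → 0 < H s ∧ 0 < H (-s) := by
    intro s hs
    have h0 : (0 : ℝ) ≤ s := by linarith
    have hs3 : (0 : ℝ) ≤ s ^ 3 := by positivity
    have hs2 : (0 : ℝ) ≤ s ^ 2 := by positivity
    have key := lattes_quartic_bound A B C D s hAn hBn hCn hDn (by linarith)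
    have e1 : H s = s ^ 4 - (4 * r) * s ^ 3 - (2 * b + 4 * a * r) * s ^ 2
        - (8 * c + 4 * b * r) * s + (b ^ 2 - 4 * a * c - 4 * c * r) := by
      rw [hHdef]; ring
    have e2 : H (-s) = s ^ 4 + (4 * r) * s ^ 3 - (2 * b + 4 * a * r) * s ^ 2
        + (8 * c + 4 * b * r) * s + (b ^ 2 - 4 * a * c - 4 * c * r) := by
      rw [hHdef]; ring
    have b1 : (4 * r) * s ^ 3 ≤ A * s ^ 3 := mul_le_mul_of_nonneg_right (le_abs_self _) hs3
    have b1' : -(A * s ^ 3) ≤ (4 * r) * s ^ 3 := by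
      have := mul_le_mul_of_nonneg_right (neg_abs_le (4 * r)) hs3; linarith
    have b2 : (2 * b + 4 * a * r) * s ^ 2 ≤ B * s ^ 2 :=
      mul_le_mul_of_nonneg_right (le_abs_self _) hs2
    have b3 : (8 * c + 4 * b * r) * s ≤ C * s := mul_le_mul_of_nonneg_right (le_abs_self _) h0
    have b3' : -(C * s) ≤ (8 * c + 4 * b * r) * s := by
      have := mul_le_mul_of_nonneg_right (neg_abs_le (8 * c + 4 * b * r)) h0; linarith
    have b4 : -D ≤ b ^ 2 - 4 * a * c - 4 * c * r := neg_abs_le _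
    constructor
    · rw [e1]; linarith
    · rw [e2]; linarith
  rcases le_total α r with hr | hr
  · -- use the interval [α + s0, X]
    set X : ℝ := max (α + s0) K with hX
    have hKX : K ≤ X := le_max_right _ _
    have hx1X : α + s0 ≤ X := le_max_left _ _
    have hH1 : H (α + s0) ≤ 0 := by
      rw [hQ (α + s0), hQ1]
      set v : ℝ := (α + s0) ^ 3 + a * (α + s0) ^ 2 + b * (α + s0) + c with hv
      have hvpos : 0 < v := hFpos (α + s0) (by linarith)
      nlinarith [mul_nonneg (sub_nonneg.mpr hr) hvpos.le]
    have hHX : 0 ≤ H X := (hbig X hKX).1.le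
    obtain ⟨x, hxmem, hxval⟩ :=
      intermediate_value_Icc hx1X hHcont.continuousOn ⟨hH1, hHX⟩
    refine ⟨x, (hFpos x (by have := hxmem.1; linarith)).ne', ?_⟩
    rw [hHdef] at hxval; exact hxval
  · -- use the interval [-X, α - s0]
    set X : ℝ := max (s0 - α) K with hX
    have hKX : K ≤ X := le_max_right _ _
    have hx2X : -X ≤ α - s0 := by
      have : s0 - α ≤ X := le_max_left _ _
      linarith
    have hH2 : H (α - s0) ≤ 0 := by
      rw [hQ (α - s0), hQ2]
      set v : ℝ := (α - s0) ^ 3 + a * (α - s0) ^ 2 + b * (α - s0) + c with hv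
      have hvneg : v < 0 := hFneg (α - s0) (by linarith)
      nlinarith [mul_nonneg (by linarith : (0:ℝ) ≤ α - r) (by linarith : (0:ℝ) ≤ -v)]
    have hHX : 0 ≤ H (-X) := (hbig X hKX).2.le
    obtain ⟨x, hxmem, hxval⟩ :=
      intermediate_value_Icc' hx2X hHcont.continuousOn ⟨hH2, hHX⟩
    refine ⟨x, (hFneg x (by have := hxmem.2; linarith)).ne, ?_⟩
    rw [hHdef] at hxval; exact hxval

/-- If the cubic `F(x) = x³ + ax² + bx + c` has negative discriminant, then the Lattès
map associated to duplication on the elliptic curve `y² = F(x)` is surjective as a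
self-map of `ℙ¹(ℝ)`. -/
theorem lattes_surjective_of_neg_discriminant (a b c : ℝ)
    (hdisc : 18 * a * b * c - 4 * a ^ 3 * c + a ^ 2 * b ^ 2 - 4 * b ^ 3 - 27 * c ^ 2 < 0) :
    Function.Surjective (lattesExt a b c) := by
  intro y
  cases y with
  | infty => exact ⟨∞, rfl⟩
  | coe r =>
    obtain ⟨x, hFx, hHx⟩ := lattes_exists_preimage a b c hdisc r
    refine ⟨(x : OnePoint ℝ), ?_⟩
    show Option.elim (Option.some x) ∞ _ = Option.some r
    simp only [Option.elim]
    rw [if_neg hFx]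
    have h4F : (4 : ℝ) * (x ^ 3 + a * x ^ 2 + b * x + c) ≠ 0 := by
      simpa using hFx
    have : ((3 * x ^ 2 + 2 * a * x + b) ^ 2 - (8 * x + 4 * a) * (x ^ 3 + a * x ^ 2 + b * x + c))
        / (4 * (x ^ 3 + a * x ^ 2 + b * x + c)) = r := by
      rw [div_eq_iff h4F]; linarith
    exact congrArg (fun t : ℝ => (t : OnePoint ℝ)) this
end
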